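/- arXiv:2308.04918 — 2 statements merged into one kernel-verified Lean document; each statement's English description precedes it below -/
import Mathlib

section
/- For every q ∈ (0,2) there exists a constant C_q > 0 such that for every square-integrable f : ℝ → ℂ and every continuously differentiable g : ℝ → ℂ with g and g' square-integrable, ∫_ℝ |f(x)|^q |g(x)|² dx ≤ C_q ‖f‖^q ‖g‖_{H¹}^q ‖g‖^{2−q}. -/
open MeasureTheory

/-- The `L²(ℝ;ℂ)` norm of a function, `‖f‖ = (∫ ‖f(x)‖² dx)^{1/2}`. -/
noncomputable def L2norm (f : ℝ → ℂ) : ℝ := Real.sqrt (∫ x, ‖f x‖ ^ 2)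

/-- The `H¹(ℝ;ℂ)` norm of a function, `‖f‖_{H¹} = (‖f‖² + ‖f'‖²)^{1/2}`. -/
noncomputable def H1norm (f : ℝ → ℂ) : ℝ :=
  Real.sqrt ((∫ x, ‖f x‖ ^ 2) + ∫ x, ‖deriv f x‖ ^ 2)

open Set Filter
open scoped ENNReal

lemma integrable_norm_sq {u : ℝ → ℂ} (hu : MemLp u 2 volume) :
    Integrable (fun x => ‖u x‖ ^ 2) volume := by
  have h := hu.norm_rpow two_ne_zero ENNReal.ofNat_ne_top
  rw [memLp_one_iff_integrable] at h
  have : (fun x => ‖u x‖ ^ 2) = (fun x => ‖u x‖ ^ (2 : ℝ≥0∞).toReal) := by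
    funext x
    rw [ENNReal.toReal_ofNat, show ((2:ℝ)) = ((2:ℕ):ℝ) by norm_num, Real.rpow_natCast]
  rw [this]; exact h

/-- The key pointwise bound: `‖g x‖² ≤ ∫‖g‖² + ∫‖g'‖²`. -/
lemma sup_bound {g : ℝ → ℂ} (hg : ContDiff ℝ 1 g) (hg2 : MemLp g 2 volume)
    (hg'2 : MemLp (deriv g) 2 volume) (x : ℝ) :
    ‖g x‖ ^ 2 ≤ (∫ t, ‖g t‖ ^ 2) + ∫ t, ‖deriv g t‖ ^ 2 := by
  set φ : ℝ → ℝ := fun t => (inner ℝ (g t) (g t) : ℝ) with hφ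
  set h : ℝ → ℝ := fun t => (inner ℝ (g t) (deriv g t) : ℝ) + (inner ℝ (deriv g t) (g t) : ℝ)
    with hh
  have hφeq : ∀ t, φ t = ‖g t‖ ^ 2 := fun t => real_inner_self_eq_norm_sq (g t)
  have hgd : Differentiable ℝ g := hg.differentiable one_ne_zero
  have hgc : Continuous g := hg.continuous
  have hg'c : Continuous (deriv g) := hg.continuous_deriv le_rfl
  have hd : ∀ t, HasDerivAt φ (h t) t := fun t =>
    (hgd t).hasDerivAt.inner ℝ (hgd t).hasDerivAt
  have hψint : Integrable (fun t => ‖g t‖ ^ 2 + ‖deriv g t‖ ^ 2) volume :=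
    (integrable_norm_sq hg2).add (integrable_norm_sq hg'2)
  have hbound : ∀ t, ‖h t‖ ≤ ‖g t‖ ^ 2 + ‖deriv g t‖ ^ 2 := by
    intro t
    have h1 : |(inner ℝ (g t) (deriv g t) : ℝ)| ≤ ‖g t‖ * ‖deriv g t‖ :=
      abs_real_inner_le_norm _ _
    have h2 : |(inner ℝ (deriv g t) (g t) : ℝ)| ≤ ‖deriv g t‖ * ‖g t‖ :=
      abs_real_inner_le_norm _ _
    have := abs_add_le (inner ℝ (g t) (deriv g t) : ℝ) (inner ℝ (deriv g t) (g t) : ℝ)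
    have h3 : 2 * (‖g t‖ * ‖deriv g t‖) ≤ ‖g t‖ ^ 2 + ‖deriv g t‖ ^ 2 := by nlinarith [two_mul_le_add_sq ‖g t‖ ‖deriv g t‖]
    rw [Real.norm_eq_abs]
    nlinarith [this, h1, h2]
  have hhc : Continuous h := by
    apply Continuous.add
    · exact hgc.inner hg'c
    · exact hg'c.inner hgc
  have hhint : Integrable h volume :=
    Integrable.mono' hψint hhc.aestronglyMeasurable (Eventually.of_forall hbound)
  have hφint : Integrable φ volume := by
    have h2 := integrable_norm_sq hg2
    have : φ = fun t => ‖g t‖ ^ 2 := funext hφeq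
    rw [this]; exact h2
  have htend : Tendsto φ atTop (nhds 0) :=
    tendsto_zero_of_hasDerivAt_of_integrableOn_Ioi (a := x) (fun t _ => hd t)
      hhint.integrableOn hφint.integrableOn
  have hkey : ∫ t in Ioi x, h t = 0 - φ x :=
    integral_Ioi_of_hasDerivAt_of_tendsto' (fun t _ => hd t) hhint.integrableOn htend
  have h1 : φ x = -∫ t in Ioi x, h t := by linarith [hkey]
  calc ‖g x‖ ^ 2 = φ x := (hφeq x).symm
    _ = -∫ t in Ioi x, h t := h1
    _ ≤ ‖∫ t in Ioi x, h t‖ := by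
        rw [Real.norm_eq_abs]; exact neg_le_abs _
    _ ≤ ∫ t in Ioi x, ‖h t‖ := norm_integral_le_integral_norm _
    _ ≤ ∫ t in Ioi x, (‖g t‖ ^ 2 + ‖deriv g t‖ ^ 2) := by
        apply integral_mono_of_nonneg (Eventually.of_forall fun t => norm_nonneg _)
          hψint.integrableOn (Eventually.of_forall fun t => hbound t)
    _ ≤ ∫ t, (‖g t‖ ^ 2 + ‖deriv g t‖ ^ 2) := by
        apply setIntegral_le_integral hψint
        exact Eventually.of_forall fun t => by positivity
    _ = (∫ t, ‖g t‖ ^ 2) + ∫ t, ‖deriv g t‖ ^ 2 :=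
        integral_add (integrable_norm_sq hg2) (integrable_norm_sq hg'2)

/-- For every `q ∈ (0,2)` there is `C_q > 0` such that for every
square-integrable `f : ℝ → ℂ` and every `C¹` function `g : ℝ → ℂ` with `g, g'`
square-integrable, `∫ |f|^q |g|² ≤ C_q ‖f‖^q ‖g‖_{H¹}^q ‖g‖^{2−q}`. -/
theorem weighted_L1_estimate (q : ℝ) (hq0 : 0 < q) (hq2 : q < 2) :
    ∃ C > (0 : ℝ), ∀ f g : ℝ → ℂ,
      MemLp f 2 volume →
      ContDiff ℝ 1 g → MemLp g 2 volume → MemLp (deriv g) 2 volume →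
      (∫ x, ‖f x‖ ^ q * ‖g x‖ ^ 2) ≤
        C * L2norm f ^ q * H1norm g ^ q * L2norm g ^ (2 - q) := by
  refine ⟨1, one_pos, fun f g hf hg hg2 hg'2 => ?_⟩
  have hq2' : (0:ℝ) < 2 - q := by linarith
  set M := H1norm g with hM
  have hM0 : 0 ≤ M := Real.sqrt_nonneg _
  have hAf : (0:ℝ) ≤ ∫ t, ‖f t‖ ^ 2 := integral_nonneg fun t => by positivity
  have hAg : (0:ℝ) ≤ ∫ t, ‖g t‖ ^ 2 := integral_nonneg fun t => by positivity
  -- pointwise sup bound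
  have hsup : ∀ x, ‖g x‖ ≤ M := by
    intro x
    have h1 := sup_bound hg hg2 hg'2 x
    have h2 : ‖g x‖ ^ 2 ≤ M ^ 2 := by
      rw [hM, H1norm, Real.sq_sqrt (by positivity)]
      exact h1
    calc ‖g x‖ = Real.sqrt (‖g x‖ ^ 2) := (Real.sqrt_sq (norm_nonneg _)).symm
      _ ≤ Real.sqrt (M ^ 2) := Real.sqrt_le_sqrt h2
      _ = M := Real.sqrt_sq hM0
  -- MemLp facts for Hölder
  have hofq : ENNReal.ofReal (2/q) = 2 / ENNReal.ofReal q := by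
    rw [ENNReal.ofReal_div_of_pos hq0, ENNReal.ofReal_ofNat]
  have hofq' : ENNReal.ofReal (2/(2-q)) = 2 / ENNReal.ofReal (2-q) := by
    rw [ENNReal.ofReal_div_of_pos hq2', ENNReal.ofReal_ofNat]
  have hF : MemLp (fun x => ‖f x‖ ^ q) (ENNReal.ofReal (2/q)) volume := by
    have := hf.norm_rpow_div (ENNReal.ofReal q)
    rw [ENNReal.toReal_ofReal hq0.le] at this
    rwa [hofq]
  have hG : MemLp (fun x => ‖g x‖ ^ (2-q)) (ENNReal.ofReal (2/(2-q))) volume := by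
    have := hg2.norm_rpow_div (ENNReal.ofReal (2-q))
    rw [ENNReal.toReal_ofReal hq2'.le] at this
    rwa [hofq']
  have hsum : (1:ℝ≥0∞)/1 = 1/(ENNReal.ofReal (2/q)) + 1/(ENNReal.ofReal (2/(2-q))) := by
    rw [one_div, one_div, one_div, ← ENNReal.ofReal_inv_of_pos (by positivity),
      ← ENNReal.ofReal_inv_of_pos (by positivity), ← ENNReal.ofReal_add (by positivity)
      (by positivity), inv_one]
    rw [show (2/q)⁻¹ + (2/(2-q))⁻¹ = 1 by field_simp; ring]
    exact ENNReal.ofReal_one.symm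
  have hFG : Integrable (fun x => ‖f x‖ ^ q * ‖g x‖ ^ (2-q)) volume := by
    have := hG.smul hF (hpqr := ⟨by simpa only [one_div] using hsum.symm⟩)
    rw [memLp_one_iff_integrable] at this
    simpa [Pi.smul_apply, smul_eq_mul, Pi.mul_def] using this
  -- Step 1: pull out the sup
  have step1 : (∫ x, ‖f x‖ ^ q * ‖g x‖ ^ 2) ≤
      M ^ q * ∫ x, ‖f x‖ ^ q * ‖g x‖ ^ (2-q) := by
    have hpt : ∀ x, ‖f x‖ ^ q * ‖g x‖ ^ 2 ≤ M ^ q * (‖f x‖ ^ q * ‖g x‖ ^ (2-q)) := by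
      intro x
      have h2 : ‖g x‖ ^ (2:ℕ) = ‖g x‖ ^ q * ‖g x‖ ^ (2-q) := by
        rw [← Real.rpow_natCast (‖g x‖) 2,
          show ((2:ℕ):ℝ) = q + (2-q) by push_cast; ring,
          Real.rpow_add_of_nonneg (norm_nonneg _) hq0.le hq2'.le]
      rw [h2]
      have h3 : ‖g x‖ ^ q ≤ M ^ q := Real.rpow_le_rpow (norm_nonneg _) (hsup x) hq0.le
      have h4 : (0:ℝ) ≤ ‖f x‖ ^ q := Real.rpow_nonneg (norm_nonneg _) _
      have h5 : (0:ℝ) ≤ ‖g x‖ ^ (2-q) := Real.rpow_nonneg (norm_nonneg _) _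
      calc ‖f x‖ ^ q * (‖g x‖ ^ q * ‖g x‖ ^ (2-q))
          = ‖g x‖ ^ q * (‖f x‖ ^ q * ‖g x‖ ^ (2-q)) := by ring
        _ ≤ M ^ q * (‖f x‖ ^ q * ‖g x‖ ^ (2-q)) :=
            mul_le_mul_of_nonneg_right h3 (by positivity)
    calc (∫ x, ‖f x‖ ^ q * ‖g x‖ ^ 2)
        ≤ ∫ x, M ^ q * (‖f x‖ ^ q * ‖g x‖ ^ (2-q)) :=
          integral_mono_of_nonneg (Eventually.of_forall fun x => by positivity)
            (hFG.const_mul _) (Eventually.of_forall hpt)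
      _ = M ^ q * ∫ x, ‖f x‖ ^ q * ‖g x‖ ^ (2-q) := integral_const_mul _ _
  -- Step 2: Hölder
  have hpq : (2/q).HolderConjugate (2/(2-q)) := by
    constructor
    · rw [inv_div, inv_div, inv_one]; ring
    · positivity
    · positivity
  have holder := integral_mul_le_Lp_mul_Lq_of_nonneg hpq
    (Eventually.of_forall fun x => Real.rpow_nonneg (norm_nonneg _) _)
    (Eventually.of_forall fun x => Real.rpow_nonneg (norm_nonneg _) _) hF hG
  have eqF : (∫ x, (‖f x‖ ^ q) ^ (2/q)) = ∫ x, ‖f x‖ ^ 2 := by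
    congr 1; funext x
    rw [← Real.rpow_mul (norm_nonneg _), show q * (2/q) = 2 by field_simp,
      show (2:ℝ) = ((2:ℕ):ℝ) by norm_num, Real.rpow_natCast]
  have eqG : (∫ x, (‖g x‖ ^ (2-q)) ^ (2/(2-q))) = ∫ x, ‖g x‖ ^ 2 := by
    congr 1; funext x
    rw [← Real.rpow_mul (norm_nonneg _), show (2-q) * (2/(2-q)) = 2 by field_simp,
      show (2:ℝ) = ((2:ℕ):ℝ) by norm_num, Real.rpow_natCast]
  rw [eqF, eqG] at holder
  have eL2f : (∫ x, ‖f x‖ ^ 2) ^ (1/(2/q)) = L2norm f ^ q := by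
    rw [L2norm, Real.sqrt_eq_rpow, ← Real.rpow_mul hAf, one_div_div]
    congr 1; ring
  have eL2g : (∫ x, ‖g x‖ ^ 2) ^ (1/(2/(2-q))) = L2norm g ^ (2-q) := by
    rw [L2norm, Real.sqrt_eq_rpow, ← Real.rpow_mul hAg, one_div_div]
    congr 1; ring
  rw [eL2f, eL2g] at holder
  calc (∫ x, ‖f x‖ ^ q * ‖g x‖ ^ 2)
      ≤ M ^ q * ∫ x, ‖f x‖ ^ q * ‖g x‖ ^ (2-q) := step1
    _ ≤ M ^ q * (L2norm f ^ q * L2norm g ^ (2-q)) := by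
        apply mul_le_mul_of_nonneg_left holder (Real.rpow_nonneg hM0 _)
    _ = 1 * L2norm f ^ q * H1norm g ^ q * L2norm g ^ (2-q) := by rw [← hM]; ring
end

section
/- Let q ∈ (1,2), let N ≥ 1 be an integer, and let e_1,…,e_N : ℝ → ℂ be square-integrable functions that are also (essentially) bounded, with ‖e_j‖_∞ ≤ B for 1 ≤ j ≤ N. Then there is a constant C > 0 depending only on q, N, B such that for all continuously differentiable u, v : ℝ → ℂ with u, u', v, v' square-integrable, Σ_{j=1}^N ⟨ |v|^q v − |u|^q u , e_j ⟩² ≤ C ‖u − v‖² ( ‖u‖_{H¹}² + ‖v‖_{H¹}² + ‖u‖^{2/(2−q)} + ‖v‖^{2/(2−q)} ), where ⟨F, e_j⟩ := Re ∫_ℝ F(x) conj(e_j(x)) dx (well defined since the integrand is integrable). -/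
open MeasureTheory

lemma rpow_mvt {q : ℝ} (hq : 1 ≤ q) {x y : ℝ} (hy : 0 ≤ y) (hxy : y ≤ x) :
    x ^ q - y ^ q ≤ q * x ^ (q - 1) * (x - y) := by
  have hx : 0 ≤ x := hy.trans hxy
  have key := norm_image_sub_le_of_norm_deriv_le_segment'
    (f := fun t : ℝ => t ^ q) (f' := fun t : ℝ => q * t ^ (q - 1))
    (a := y) (b := x) (C := q * x ^ (q - 1))
    (fun t ht => (Real.hasDerivAt_rpow_const (Or.inr hq)).hasDerivWithinAt)
    (fun t ht => by
      have ht0 : 0 ≤ t := hy.trans ht.1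
      have h1 : t ^ (q - 1) ≤ x ^ (q - 1) :=
        Real.rpow_le_rpow ht0 ht.2.le (by linarith)
      rw [Real.norm_eq_abs, abs_of_nonneg (by positivity)]
      exact mul_le_mul_of_nonneg_left h1 (by linarith))
    x (Set.right_mem_Icc.mpr hxy)
  calc x ^ q - y ^ q ≤ ‖x ^ q - y ^ q‖ := Real.le_norm_self _
    _ ≤ q * x ^ (q - 1) * (x - y) := key

lemma rpow_split {q x : ℝ} (hq : 1 < q) (hx : 0 ≤ x) : x ^ q = x ^ (q-1) * x := by
  rcases eq_or_lt_of_le hx with h|h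
  · rw [← h, Real.zero_rpow (by linarith), mul_zero]
  · nth_rewrite 1 [show q = (q-1)+1 by ring]
    rw [Real.rpow_add_one h.ne']

lemma rpow_abs_sub {q : ℝ} (hq : 1 < q) {a b : ℝ} (ha : 0 ≤ a) (hb : 0 ≤ b) :
    |b ^ q - a ^ q| ≤ q * (a ^ (q-1) + b ^ (q-1)) * |b - a| := by
  have hq1 : (1:ℝ) ≤ q := hq.le
  rcases le_total a b with h|h
  · have h1 := rpow_mvt hq1 ha h
    have h2 : a ^ q ≤ b ^ q := Real.rpow_le_rpow ha h (by linarith)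
    rw [abs_of_nonneg (by linarith), abs_of_nonneg (by linarith)]
    nlinarith [mul_nonneg (mul_nonneg (by linarith : (0:ℝ) ≤ q) (Real.rpow_nonneg ha (q-1))) (sub_nonneg.mpr h)]
  · have h1 := rpow_mvt hq1 hb h
    have h2 : b ^ q ≤ a ^ q := Real.rpow_le_rpow hb h (by linarith)
    rw [abs_of_nonpos (by linarith), abs_of_nonpos (by linarith)]
    nlinarith [mul_nonneg (mul_nonneg (by linarith : (0:ℝ) ≤ q) (Real.rpow_nonneg hb (q-1))) (sub_nonneg.mpr h)]

lemma pointwise_bound {q : ℝ} (hq : 1 < q) (a b : ℂ) :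
    ‖((‖b‖ ^ q : ℝ) : ℂ) * b - ((‖a‖ ^ q : ℝ) : ℂ) * a‖ ≤
      (1 + q) * ((‖a‖ ^ (q-1) + ‖b‖ ^ (q-1)) * ((‖a‖ + ‖b‖) * ‖a - b‖)) := by
  have split : ((‖b‖ ^ q : ℝ) : ℂ) * b - ((‖a‖ ^ q : ℝ) : ℂ) * a
      = ((‖b‖ ^ q : ℝ) : ℂ) * (b - a) + ((‖b‖ ^ q - ‖a‖ ^ q : ℝ) : ℂ) * a := by
    push_cast; ring
  rw [split]
  have h1 : ‖((‖b‖ ^ q : ℝ) : ℂ) * (b - a)‖ = ‖b‖ ^ q * ‖b - a‖ := by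
    rw [norm_mul, Complex.norm_real, Real.norm_eq_abs,
      abs_of_nonneg (Real.rpow_nonneg (norm_nonneg b) q)]
  have h2 : ‖((‖b‖ ^ q - ‖a‖ ^ q : ℝ) : ℂ) * a‖ = |‖b‖ ^ q - ‖a‖ ^ q| * ‖a‖ := by
    rw [norm_mul, Complex.norm_real, Real.norm_eq_abs]
  have key := norm_add_le (((‖b‖ ^ q : ℝ) : ℂ) * (b - a)) (((‖b‖ ^ q - ‖a‖ ^ q : ℝ) : ℂ) * a)
  rw [h1, h2] at key
  have hba : ‖b - a‖ = ‖a - b‖ := norm_sub_rev b a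
  have habs : |‖b‖ - ‖a‖| ≤ ‖a - b‖ := by
    rw [abs_sub_comm]; exact abs_norm_sub_norm_le a b
  have h3 : |‖b‖ ^ q - ‖a‖ ^ q| ≤ q * (‖a‖ ^ (q-1) + ‖b‖ ^ (q-1)) * ‖a - b‖ := by
    calc |‖b‖ ^ q - ‖a‖ ^ q| ≤ q * (‖a‖ ^ (q-1) + ‖b‖ ^ (q-1)) * |‖b‖ - ‖a‖| :=
          rpow_abs_sub hq (norm_nonneg a) (norm_nonneg b)
      _ ≤ q * (‖a‖ ^ (q-1) + ‖b‖ ^ (q-1)) * ‖a - b‖ := by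
          apply mul_le_mul_of_nonneg_left habs
          positivity
  have h4 : ‖b‖ ^ q = ‖b‖ ^ (q-1) * ‖b‖ := rpow_split hq (norm_nonneg b)
  have hA := norm_nonneg a; have hB := norm_nonneg b; have hD := norm_nonneg (a - b)
  have hpa := Real.rpow_nonneg (norm_nonneg a) (q-1)
  have hpb := Real.rpow_nonneg (norm_nonneg b) (q-1)
  nlinarith [norm_nonneg (b - a), mul_nonneg hpa hA, mul_nonneg hpb hB,
    mul_nonneg (mul_nonneg hpa hA) hD, mul_nonneg (mul_nonneg hpb hB) hD,
    mul_nonneg (mul_nonneg hpa hB) hD, mul_nonneg (mul_nonneg hpb hA) hD]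

lemma pow_two_eq_rpow (y : ℝ) : y ^ (2:ℕ) = |y| ^ (2:ℝ) := by
  rw [show (2:ℝ) = ((2:ℕ):ℝ) by norm_num, Real.rpow_natCast, sq_abs]

lemma memLp2_ofReal {E : Type*} [NormedAddCommGroup E] {f : ℝ → E} (hf : MemLp f 2 volume) :
    MemLp f (ENNReal.ofReal 2) volume := by
  convert hf using 2; norm_num

lemma cauchy_schwarz_int {E F : Type*} [NormedAddCommGroup E] [NormedAddCommGroup F]
    {f : ℝ → E} {g : ℝ → F} (hf : MemLp f 2 volume) (hg : MemLp g 2 volume) :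
    ∫ t, ‖f t‖ * ‖g t‖ ≤ Real.sqrt (∫ t, ‖f t‖ ^ 2) * Real.sqrt (∫ t, ‖g t‖ ^ 2) := by
  have h := integral_mul_norm_le_Lp_mul_Lq (μ := volume) (E := ℝ)
    (f := fun t => ‖f t‖) (g := fun t => ‖g t‖)
    (Real.HolderConjugate.two_two : Real.HolderConjugate 2 2)
    (memLp2_ofReal hf.norm) (memLp2_ofReal hg.norm)
  simp only [norm_norm] at h
  have e1 : ∀ (h : ℝ → ℝ), (∀ t, 0 ≤ h t) → ∫ t, h t ^ (2:ℝ) = ∫ t, h t ^ (2:ℕ) := by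
    intro h hh; apply integral_congr_ae; filter_upwards with t
    rw [pow_two_eq_rpow, abs_of_nonneg (hh t)]
  rw [e1 (fun t => ‖f t‖) (fun t => norm_nonneg _),
    e1 (fun t => ‖g t‖) (fun t => norm_nonneg _)] at h
  rw [Real.sqrt_eq_rpow, Real.sqrt_eq_rpow]
  exact h

lemma integrable_norm_mul {E F : Type*} [NormedAddCommGroup E] [NormedAddCommGroup F]
    {f : ℝ → E} {g : ℝ → F} (hf : MemLp f 2 volume) (hg : MemLp g 2 volume) :
    Integrable (fun t => ‖f t‖ * ‖g t‖) volume := by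
  have h : MemLp (fun t => ‖f t‖ • ‖g t‖) 1 volume :=
    MemLp.smul (p := 2) (q := 2) (r := 1) hg.norm hf.norm
  exact memLp_one_iff_integrable.mp (by simpa [smul_eq_mul] using h)

lemma integrable_sq {E : Type*} [NormedAddCommGroup E] {f : ℝ → E} (hf : MemLp f 2 volume) :
    Integrable (fun t => ‖f t‖ ^ (2:ℕ)) volume := by
  have h := hf.integrable_norm_rpow (by norm_num) (by norm_num)
  simp only [ENNReal.toReal_ofNat] at h
  refine h.congr (Filter.Eventually.of_forall fun t => ?_)
  show ‖f t‖ ^ (2:ℝ) = ‖f t‖ ^ (2:ℕ)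
  rw [pow_two_eq_rpow, abs_of_nonneg (norm_nonneg _)]

lemma sup_sq_le {u : ℝ → ℂ} (hu : ContDiff ℝ 1 u) (hu2 : MemLp u 2 volume)
    (hu'2 : MemLp (deriv u) 2 volume) (x : ℝ) :
    ‖u x‖ ^ (2:ℕ) ≤ (∫ t, ‖u t‖ ^ (2:ℕ)) + ∫ t, ‖deriv u t‖ ^ (2:ℕ) := by
  have hud : Differentiable ℝ u := hu.differentiable one_ne_zero
  have hu'c : Continuous (deriv u) := hu.continuous_deriv le_rfl
  have huc : Continuous u := hu.continuous
  set g : ℝ → ℝ := fun t => ‖u t‖ ^ (2:ℕ) with hgdef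
  set D : ℝ → ℝ := fun t =>
    2 * ((u t).re * (deriv u t).re + (u t).im * (deriv u t).im) with hDdef
  have hDcont : Continuous D := by
    apply Continuous.mul continuous_const
    exact ((Complex.continuous_re.comp huc).mul (Complex.continuous_re.comp hu'c)).add
      ((Complex.continuous_im.comp huc).mul (Complex.continuous_im.comp hu'c))
  have hgD : ∀ t, HasDerivAt g (D t) t := by
    intro t
    have h0 : HasDerivAt u (deriv u t) t := (hud t).hasDerivAt
    have hre : HasDerivAt (fun s => (u s).re) (deriv u t).re t :=
      (Complex.reCLM.hasFDerivAt.comp_hasDerivAt t h0)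
    have him : HasDerivAt (fun s => (u s).im) (deriv u t).im t :=
      (Complex.imCLM.hasFDerivAt.comp_hasDerivAt t h0)
    have key := (hre.mul hre).add (him.mul him)
    have hfun : g = fun s => (u s).re * (u s).re + (u s).im * (u s).im := by
      funext s
      show ‖u s‖ ^ (2:ℕ) = (u s).re * (u s).re + (u s).im * (u s).im
      rw [Complex.sq_norm, Complex.normSq_apply]
    rw [hfun, hDdef]
    exact key.congr_deriv (by ring)
  set h : ℝ → ℝ := fun t => 2 * (‖u t‖ * ‖deriv u t‖) with hhdef
  have hDbound : ∀ t, |D t| ≤ h t := by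
    intro t
    have h1 : D t = 2 * ((starRingEnd ℂ) (u t) * deriv u t).re := by
      rw [hDdef]
      simp only [Complex.mul_re, Complex.conj_re, Complex.conj_im]
      ring
    have h2 : ‖(starRingEnd ℂ) (u t) * deriv u t‖ = ‖u t‖ * ‖deriv u t‖ := by
      rw [norm_mul, Complex.norm_conj]
    rw [h1, abs_mul, abs_two]
    have h4 : h t = 2 * (‖u t‖ * ‖deriv u t‖) := rfl
    have h3 := Complex.abs_re_le_norm ((starRingEnd ℂ) (u t) * deriv u t)
    rw [h2] at h3
    rw [h4]
    linarith
  have hInt : Integrable h volume := (integrable_norm_mul hu2 hu'2).const_mul 2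
  have hI1 : (0:ℝ) ≤ ∫ t, ‖u t‖ ^ (2:ℕ) := integral_nonneg fun t => by positivity
  have hI2 : (0:ℝ) ≤ ∫ t, ‖deriv u t‖ ^ (2:ℕ) := integral_nonneg fun t => by positivity
  have hIb : ∫ t, h t ≤ (∫ t, ‖u t‖ ^ (2:ℕ)) + ∫ t, ‖deriv u t‖ ^ (2:ℕ) := by
    have := cauchy_schwarz_int hu2 hu'2
    have he : ∫ t, h t = 2 * ∫ t, ‖u t‖ * ‖deriv u t‖ := by
      simp only [hhdef]
      rw [MeasureTheory.integral_const_mul]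
    rw [he]
    nlinarith [Real.sq_sqrt hI1, Real.sq_sqrt hI2,
      sq_nonneg (Real.sqrt (∫ t, ‖u t‖ ^ (2:ℕ)) - Real.sqrt (∫ t, ‖deriv u t‖ ^ (2:ℕ)))]
  have hsmall : ∀ ε > (0:ℝ), ∃ y, g y < ε := by
    intro ε hε
    by_contra hcon
    push_neg at hcon
    have hlt : volume {y : ℝ | ε ≤ g y} < ⊤ := (integrable_sq hu2).measure_ge_lt_top hε
    have hs : {y : ℝ | ε ≤ g y} = Set.univ := Set.eq_univ_of_forall hcon
    rw [hs, Real.volume_univ] at hlt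
    exact lt_irrefl _ hlt
  refine le_of_forall_pos_le_add fun ε hε => ?_
  obtain ⟨y, hy⟩ := hsmall ε hε
  have h1 : ∫ t in y..x, D t = g x - g y :=
    intervalIntegral.integral_eq_sub_of_hasDerivAt (fun t _ => hgD t)
      (hDcont.intervalIntegrable y x)
  have h2 : |∫ t in y..x, D t| ≤ ∫ t, h t := by
    calc |∫ t in y..x, D t| ≤ ∫ t in Set.uIoc y x, ‖D t‖ := by
          rw [← Real.norm_eq_abs]
          exact intervalIntegral.norm_integral_le_integral_norm_uIoc
      _ ≤ ∫ t in Set.uIoc y x, h t := by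
          apply setIntegral_mono_on
          · exact (hDcont.norm).integrableOn_uIoc
          · exact hInt.integrableOn
          · exact measurableSet_uIoc
          · intro t _
            rw [Real.norm_eq_abs]
            exact hDbound t
      _ ≤ ∫ t, h t := setIntegral_le_integral hInt
          (Filter.Eventually.of_forall fun t => by positivity)
  have h3 : g x - g y ≤ |∫ t in y..x, D t| := h1 ▸ le_abs_self _
  show g x ≤ ((∫ t, ‖u t‖ ^ (2:ℕ)) + ∫ t, ‖deriv u t‖ ^ (2:ℕ)) + ε
  linarith

lemma young_pair {q : ℝ} (hq1 : 1 < q) (hq2 : q < 2) {H L : ℝ} (hH : 0 ≤ H) (hL : 0 ≤ L) :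
    (H ^ (q-1)) ^ (2:ℕ) * L ^ (2:ℕ) ≤ H ^ (2:ℕ) + L ^ (2/(2-q)) := by
  have h2q : (0:ℝ) < 2 - q := by linarith
  have h := Real.geom_mean_le_arith_mean2_weighted (w₁ := q-1) (w₂ := 2-q)
    (p₁ := H ^ (2:ℕ)) (p₂ := L ^ (2/(2-q)))
    (by linarith) (by linarith) (by positivity) (by positivity) (by ring)
  have e1 : ((H:ℝ) ^ (2:ℕ)) ^ (q-1) = (H ^ (q-1)) ^ (2:ℕ) := by
    rw [← Real.rpow_natCast H 2, ← Real.rpow_mul hH, ← Real.rpow_natCast (H ^ (q-1)) 2,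
      ← Real.rpow_mul hH]
    norm_num
    ring_nf
  have e2 : ((L:ℝ) ^ (2/(2-q))) ^ (2-q) = L ^ (2:ℕ) := by
    rw [← Real.rpow_mul hL, div_mul_cancel₀ _ h2q.ne', ← Real.rpow_natCast L 2]
    norm_num
  rw [e1, e2] at h
  have hX : (0:ℝ) ≤ H ^ (2:ℕ) := by positivity
  have hY : (0:ℝ) ≤ L ^ (2/(2-q)) := by positivity
  nlinarith


set_option maxHeartbeats 1000000 in
/-- Let `q ∈ (1,2)`, `N ≥ 1`, and let `e_1,…,e_N : ℝ → ℂ` be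
square-integrable functions that are essentially bounded by `B`.  There is `C > 0`,
depending only on `q, N, B`, such that for all `C¹` functions `u, v : ℝ → ℂ` with
`u, u', v, v'` square-integrable,
`Σ_j ⟨|v|^q v − |u|^q u, e_j⟩² ≤ C ‖u−v‖² (‖u‖_{H¹}² + ‖v‖_{H¹}² + ‖u‖^{2/(2−q)} + ‖v‖^{2/(2−q)})`,
where `⟨F, e_j⟩ = Re ∫ F(x) conj(e_j(x)) dx`. -/
theorem projected_nonlinearity_estimate
    (q : ℝ) (hq1 : 1 < q) (hq2 : q < 2) (N : ℕ) (hN : 1 ≤ N) (B : ℝ) :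
    ∃ C > (0 : ℝ), ∀ e : Fin N → ℝ → ℂ,
      (∀ j, MemLp (e j) 2 volume) →
      (∀ j, ∀ᵐ x ∂(volume : Measure ℝ), ‖e j x‖ ≤ B) →
      ∀ u v : ℝ → ℂ,
        ContDiff ℝ 1 u → MemLp u 2 volume → MemLp (deriv u) 2 volume →
        ContDiff ℝ 1 v → MemLp v 2 volume → MemLp (deriv v) 2 volume →
        (∑ j : Fin N,
            ((∫ x, (((‖v x‖ ^ q : ℝ) : ℂ) * v x - ((‖u x‖ ^ q : ℝ) : ℂ) * u x) *
              (starRingEnd ℂ) (e j x)).re) ^ 2) ≤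
          C * L2norm (fun x => u x - v x) ^ 2 *
            (H1norm u ^ 2 + H1norm v ^ 2 +
              L2norm u ^ (2 / (2 - q)) + L2norm v ^ (2 / (2 - q))) := by
  have hN0 : (0:ℝ) < N := by exact_mod_cast Nat.lt_of_lt_of_le Nat.zero_lt_one hN
  set B' : ℝ := max B 0 + 1 with hB'def
  have hB'pos : (0:ℝ) < B' := by
    have := le_max_right B 0; rw [hB'def]; linarith
  have hBB' : B ≤ B' := by
    have := le_max_left B 0; rw [hB'def]; linarith
  have h1q : (0:ℝ) < 1 + q := by linarith
  refine ⟨(N:ℝ) * (8 * B'^2 * (1+q)^2), by positivity, ?_⟩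
  intro e he heB u v hu hu2 hu'2 hv hv2 hv'2
  have hw2 : MemLp (fun x => u x - v x) 2 volume := hu2.sub hv2
  -- basic nonnegativity
  have hHu0 : 0 ≤ H1norm u := Real.sqrt_nonneg _
  have hHv0 : 0 ≤ H1norm v := Real.sqrt_nonneg _
  have hLu0 : 0 ≤ L2norm u := Real.sqrt_nonneg _
  have hLv0 : 0 ≤ L2norm v := Real.sqrt_nonneg _
  have hLw0 : 0 ≤ L2norm (fun x => u x - v x) := Real.sqrt_nonneg _
  -- sup bounds
  have hsupu : ∀ y, ‖u y‖ ≤ H1norm u := fun y =>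
    Real.le_sqrt_of_sq_le (sup_sq_le hu hu2 hu'2 y)
  have hsupv : ∀ y, ‖v y‖ ≤ H1norm v := fun y =>
    Real.le_sqrt_of_sq_le (sup_sq_le hv hv2 hv'2 y)
  set S : ℝ := H1norm u ^ (q-1) + H1norm v ^ (q-1) with hSdef
  have hS0 : 0 ≤ S := by
    rw [hSdef]; positivity
  set c : ℝ := B' * ((1+q) * S) with hcdef
  have hc0 : 0 ≤ c := by rw [hcdef]; positivity
  set M : ℝ := 8 * B'^2 * (1+q)^2 * L2norm (fun x => u x - v x) ^ 2 *
      (H1norm u ^ 2 + H1norm v ^ 2 +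
        L2norm u ^ (2 / (2 - q)) + L2norm v ^ (2 / (2 - q))) with hMdef
  have key : ∀ j : Fin N,
      ((∫ x, (((‖v x‖ ^ q : ℝ) : ℂ) * v x - ((‖u x‖ ^ q : ℝ) : ℂ) * u x) *
        (starRingEnd ℂ) (e j x)).re) ^ 2 ≤ M := by
    intro j
    set F : ℝ → ℂ := fun x => ((‖v x‖ ^ q : ℝ) : ℂ) * v x - ((‖u x‖ ^ q : ℝ) : ℂ) * u x
      with hFdef
    -- integrable dominator
    have hg0int : Integrable (fun x => c * ((‖u x‖ + ‖v x‖) * ‖u x - v x‖)) volume := by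
      have h1 : Integrable (fun x => (‖u x‖ + ‖v x‖) * ‖u x - v x‖) volume := by
        have := integrable_norm_mul (f := fun x => ‖u x‖ + ‖v x‖)
          (g := fun x => u x - v x) (hu2.norm.add hv2.norm) hw2
        refine this.congr (Filter.Eventually.of_forall fun x => ?_)
        show ‖‖u x‖ + ‖v x‖‖ * ‖u x - v x‖ = (‖u x‖ + ‖v x‖) * ‖u x - v x‖
        rw [Real.norm_of_nonneg (by positivity)]
      exact h1.const_mul c
    have hr1 : |(∫ x, F x * (starRingEnd ℂ) (e j x)).re| ≤
        ∫ x, ‖F x * (starRingEnd ℂ) (e j x)‖ := by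
      refine le_trans (Complex.abs_re_le_norm _) ?_
      exact norm_integral_le_integral_norm (fun x => F x * (starRingEnd ℂ) (e j x))
    have hr2 : ∫ x, ‖F x * (starRingEnd ℂ) (e j x)‖ ≤
        ∫ x, c * ((‖u x‖ + ‖v x‖) * ‖u x - v x‖) := by
      refine integral_mono_of_nonneg (Filter.Eventually.of_forall fun x => norm_nonneg _)
        hg0int ?_
      filter_upwards [heB j] with x hx
      have hpw := pointwise_bound hq1 (u x) (v x)
      have hb1 : ‖u x‖ ^ (q-1) ≤ H1norm u ^ (q-1) :=
        Real.rpow_le_rpow (norm_nonneg _) (hsupu x) (by linarith)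
      have hb2 : ‖v x‖ ^ (q-1) ≤ H1norm v ^ (q-1) :=
        Real.rpow_le_rpow (norm_nonneg _) (hsupv x) (by linarith)
      calc ‖F x * (starRingEnd ℂ) (e j x)‖ = ‖F x‖ * ‖e j x‖ := by
            rw [norm_mul, RCLike.norm_conj]
        _ ≤ ((1 + q) * ((‖u x‖ ^ (q-1) + ‖v x‖ ^ (q-1)) *
              ((‖u x‖ + ‖v x‖) * ‖u x - v x‖))) * B' := by
            refine mul_le_mul hpw (hx.trans hBB') (norm_nonneg _) ?_
            positivity
        _ ≤ ((1 + q) * (S * ((‖u x‖ + ‖v x‖) * ‖u x - v x‖))) * B' := by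
            rw [hSdef]
            gcongr
        _ = c * ((‖u x‖ + ‖v x‖) * ‖u x - v x‖) := by rw [hcdef]; ring
    have hr3 : ∫ x, c * ((‖u x‖ + ‖v x‖) * ‖u x - v x‖) =
        c * ∫ x, (‖u x‖ + ‖v x‖) * ‖u x - v x‖ := integral_const_mul c _
    have hr4 : ∫ x, (‖u x‖ + ‖v x‖) * ‖u x - v x‖ ≤
        (L2norm u + L2norm v) * L2norm (fun x => u x - v x) := by
      have hsplit : ∫ x, (‖u x‖ + ‖v x‖) * ‖u x - v x‖ =
          (∫ x, ‖u x‖ * ‖u x - v x‖) + ∫ x, ‖v x‖ * ‖u x - v x‖ := by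
        simp_rw [add_mul]
        exact integral_add (integrable_norm_mul hu2 hw2) (integrable_norm_mul hv2 hw2)
      have hcs1 : ∫ x, ‖u x‖ * ‖u x - v x‖ ≤ L2norm u * L2norm (fun x => u x - v x) :=
        cauchy_schwarz_int hu2 hw2
      have hcs2 : ∫ x, ‖v x‖ * ‖u x - v x‖ ≤ L2norm v * L2norm (fun x => u x - v x) :=
        cauchy_schwarz_int hv2 hw2
      rw [hsplit]
      nlinarith
    have hr5 : |(∫ x, F x * (starRingEnd ℂ) (e j x)).re| ≤
        c * ((L2norm u + L2norm v) * L2norm (fun x => u x - v x)) := by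
      refine hr1.trans (hr2.trans ?_)
      rw [hr3]
      exact mul_le_mul_of_nonneg_left hr4 hc0
    have hr6 : ((∫ x, F x * (starRingEnd ℂ) (e j x)).re) ^ 2 ≤
        (c * ((L2norm u + L2norm v) * L2norm (fun x => u x - v x))) ^ 2 := by
      rw [← sq_abs]
      exact pow_le_pow_left₀ (abs_nonneg _) hr5 2
    -- Young step
    have y11 := young_pair hq1 hq2 hHu0 hLu0
    have y12 := young_pair hq1 hq2 hHu0 hLv0
    have y21 := young_pair hq1 hq2 hHv0 hLu0
    have y22 := young_pair hq1 hq2 hHv0 hLv0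
    have p1 : S ^ 2 ≤ 2 * ((H1norm u ^ (q-1)) ^ 2 + (H1norm v ^ (q-1)) ^ 2) := by
      rw [hSdef]; nlinarith [sq_nonneg (H1norm u ^ (q-1) - H1norm v ^ (q-1))]
    have p2 : (L2norm u + L2norm v) ^ 2 ≤ 2 * (L2norm u ^ 2 + L2norm v ^ 2) := by
      nlinarith [sq_nonneg (L2norm u - L2norm v)]
    have h8 : S ^ 2 * (L2norm u + L2norm v) ^ 2 ≤
        8 * (H1norm u ^ 2 + H1norm v ^ 2 +
          L2norm u ^ (2 / (2 - q)) + L2norm v ^ (2 / (2 - q))) := by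
      calc S ^ 2 * (L2norm u + L2norm v) ^ 2
          ≤ (2 * ((H1norm u ^ (q-1)) ^ 2 + (H1norm v ^ (q-1)) ^ 2)) *
            (2 * (L2norm u ^ 2 + L2norm v ^ 2)) := by
            refine mul_le_mul p1 p2 (sq_nonneg _) ?_
            positivity
        _ = 4 * ((H1norm u ^ (q-1)) ^ 2 * L2norm u ^ 2 +
              (H1norm u ^ (q-1)) ^ 2 * L2norm v ^ 2 +
              (H1norm v ^ (q-1)) ^ 2 * L2norm u ^ 2 +
              (H1norm v ^ (q-1)) ^ 2 * L2norm v ^ 2) := by ring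
        _ ≤ 8 * (H1norm u ^ 2 + H1norm v ^ 2 +
              L2norm u ^ (2 / (2 - q)) + L2norm v ^ (2 / (2 - q))) := by linarith
    calc ((∫ x, F x * (starRingEnd ℂ) (e j x)).re) ^ 2
        ≤ (c * ((L2norm u + L2norm v) * L2norm (fun x => u x - v x))) ^ 2 := hr6
      _ = (B' ^ 2 * (1+q) ^ 2) * ((S ^ 2 * (L2norm u + L2norm v) ^ 2) *
            L2norm (fun x => u x - v x) ^ 2) := by rw [hcdef]; ring
      _ ≤ (B' ^ 2 * (1+q) ^ 2) * ((8 * (H1norm u ^ 2 + H1norm v ^ 2 +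
            L2norm u ^ (2 / (2 - q)) + L2norm v ^ (2 / (2 - q)))) *
            L2norm (fun x => u x - v x) ^ 2) := by
          refine mul_le_mul_of_nonneg_left ?_ (by positivity)
          exact mul_le_mul_of_nonneg_right h8 (sq_nonneg _)
      _ = M := by rw [hMdef]; ring
  calc (∑ j : Fin N,
          ((∫ x, (((‖v x‖ ^ q : ℝ) : ℂ) * v x - ((‖u x‖ ^ q : ℝ) : ℂ) * u x) *
            (starRingEnd ℂ) (e j x)).re) ^ 2)
      ≤ (Finset.univ : Finset (Fin N)).card • M :=
        Finset.sum_le_card_nsmul _ _ M (fun j _ => key j)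
    _ = (N : ℝ) * M := by
        rw [Finset.card_univ, Fintype.card_fin, nsmul_eq_mul]
    _ = (N:ℝ) * (8 * B'^2 * (1+q)^2) * L2norm (fun x => u x - v x) ^ 2 *
          (H1norm u ^ 2 + H1norm v ^ 2 +
            L2norm u ^ (2 / (2 - q)) + L2norm v ^ (2 / (2 - q))) := by
        rw [hMdef]; ring
end
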